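/- Let G be a finite group with at least n nontrivial Sylow subgroups (counting all Sylow p-subgroups for all primes p dividing |G|). Then the number of subgroups of G not attaining the maximum Chermak–Delgado measure is at least n. -/

import Mathlib

/-- The Chermak–Delgado measure of a subgroup. -/
noncomputable def cdMeasure {G : Type*} [Group G] (H : Subgroup G) : ℕ :=
  Nat.card H * Nat.card (Subgroup.centralizer (H : Set G))

open Subgroup
open scoped Pointwise

section CDAux
open Subgroup
open scoped Pointwise

variable {G : Type*} [Group G] [Finite G]

lemma CD.card_mul_card_inf (H K : Subgroup G) :
    Nat.card (↑H * ↑K : Set G) * Nat.card (H ⊓ K : Subgroup G) = Nat.card H * Nat.card K := by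
  classical
  have hchoice : ∀ x : (↑H * ↑K : Set G), ∃ hk : G × G,
      hk.1 ∈ H ∧ hk.2 ∈ K ∧ hk.1 * hk.2 = (x : G) := by
    rintro ⟨x, hx⟩
    obtain ⟨a, ha, b, hb, hab⟩ := Set.mem_mul.mp hx
    exact ⟨(a, b), ha, hb, hab⟩
  choose σ hσ1 hσ2 hσ3 using hchoice
  let f : (↑H * ↑K : Set G) × ↥(H ⊓ K) → ↥H × ↥K := fun z =>
    (⟨(σ z.1).1 * z.2, mul_mem (hσ1 z.1) (Subgroup.mem_inf.mp z.2.2).1⟩,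
     ⟨(z.2 : G)⁻¹ * (σ z.1).2, mul_mem (inv_mem (Subgroup.mem_inf.mp z.2.2).2) (hσ2 z.1)⟩)
  have hbij : Function.Bijective f := by
    constructor
    · rintro ⟨x, d⟩ ⟨y, e⟩ h
      simp only [f, Prod.mk.injEq, Subtype.mk.injEq] at h
      obtain ⟨h1, h2⟩ := h
      have hxy : (x : G) = y := by
        rw [← hσ3 x, ← hσ3 y]
        calc (σ x).1 * (σ x).2
            = ((σ x).1 * d) * ((d : G)⁻¹ * (σ x).2) := by group
          _ = ((σ y).1 * e) * ((e : G)⁻¹ * (σ y).2) := by rw [h1, h2]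
          _ = (σ y).1 * (σ y).2 := by group
      have hxy' : x = y := Subtype.ext hxy
      subst hxy'
      have : (d : G) = e := mul_left_cancel h1
      exact Prod.ext rfl (Subtype.ext this)
    · rintro ⟨h, k⟩
      have hx : (h : G) * k ∈ (↑H * ↑K : Set G) := Set.mul_mem_mul h.2 k.2
      set x : (↑H * ↑K : Set G) := ⟨(h : G) * k, hx⟩ with hxdef
      have hmul : (σ x).1 * (σ x).2 = (h : G) * k := hσ3 x
      have e2 : ((σ x).1)⁻¹ * (h : G) = (σ x).2 * (k : G)⁻¹ := by
        have := congrArg (fun g => ((σ x).1)⁻¹ * g * (k : G)⁻¹) hmul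
        simpa [mul_assoc] using this.symm
      have hd : ((σ x).1)⁻¹ * (h : G) ∈ H ⊓ K := by
        refine Subgroup.mem_inf.mpr ⟨mul_mem (inv_mem (hσ1 x)) h.2, ?_⟩
        rw [e2]
        exact mul_mem (hσ2 x) (inv_mem k.2)
      refine ⟨⟨x, ⟨_, hd⟩⟩, ?_⟩
      refine Prod.ext (Subtype.ext ?_) (Subtype.ext ?_)
      · show (σ x).1 * (((σ x).1)⁻¹ * (h : G)) = (h : G)
        group
      · show (((σ x).1)⁻¹ * (h : G))⁻¹ * (σ x).2 = (k : G)
        rw [mul_inv_rev, inv_inv, mul_assoc, hmul]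
        group
  have := Nat.card_congr (Equiv.ofBijective f hbij)
  simpa [Nat.card_prod] using this

lemma CD.centralizer_sup (H K : Subgroup G) :
    centralizer ((H ⊔ K : Subgroup G) : Set G) = centralizer (H : Set G) ⊓ centralizer (K : Set G) := by
  apply le_antisymm
  · exact le_inf (centralizer_le (SetLike.coe_subset_coe.mpr le_sup_left))
      (centralizer_le (SetLike.coe_subset_coe.mpr le_sup_right))
  · rw [le_centralizer_iff]
    exact sup_le (le_centralizer_iff.mpr inf_le_left) (le_centralizer_iff.mpr inf_le_right)

lemma CD.subset_sup (H K : Subgroup G) : (↑H * ↑K : Set G) ⊆ ((H ⊔ K : Subgroup G) : Set G) := by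
  rintro x hx
  obtain ⟨a, ha, b, hb, rfl⟩ := Set.mem_mul.mp hx
  exact mul_mem (Subgroup.mem_sup_left ha) (Subgroup.mem_sup_right hb)
lemma CD.cd_eq_of_max {H K : Subgroup G} (hH : ∀ L : Subgroup G, cdMeasure L ≤ cdMeasure H)
    (hK : cdMeasure K = cdMeasure H) :
    cdMeasure (H ⊓ K) = cdMeasure H ∧
      Nat.card (H ⊔ K : Subgroup G) * Nat.card (H ⊓ K : Subgroup G) = Nat.card H * Nat.card K := by
  classical
  set M := cdMeasure H with hM
  set P := Nat.card (↑H * ↑K : Set G) with hPdef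
  set Q := Nat.card (↑(centralizer (H : Set G)) * ↑(centralizer (K : Set G)) : Set G) with hQdef
  set c := Nat.card (H ⊔ K : Subgroup G) with hc
  set c' := Nat.card (centralizer ((H ⊔ K : Subgroup G) : Set G)) with hc'
  set d := Nat.card (H ⊓ K : Subgroup G) with hd
  set d' := Nat.card (centralizer ((H ⊓ K : Subgroup G) : Set G)) with hd'
  have e1 : P * d = Nat.card H * Nat.card K := CD.card_mul_card_inf H K
  have e2 : Q * c' = Nat.card (centralizer (H : Set G)) * Nat.card (centralizer (K : Set G)) := by
    have := CD.card_mul_card_inf (centralizer (H : Set G)) (centralizer (K : Set G))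
    rwa [← CD.centralizer_sup] at this
  have i3 : P ≤ c := by
    have := Nat.card_mono (Set.toFinite _) (CD.subset_sup H K)
    exact this
  have i4 : Q ≤ d' := by
    have hsub : (↑(centralizer (H : Set G)) * ↑(centralizer (K : Set G)) : Set G)
        ⊆ ((centralizer ((H ⊓ K : Subgroup G) : Set G)) : Set G) := by
      rintro x hx
      obtain ⟨u, hu, v, hv, rfl⟩ := Set.mem_mul.mp hx
      exact mul_mem (centralizer_le (SetLike.coe_subset_coe.mpr inf_le_left) hu)
        (centralizer_le (SetLike.coe_subset_coe.mpr inf_le_right) hv)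
    have := Nat.card_mono (Set.toFinite _) hsub
    exact this
  have hMeq : M = Nat.card H * Nat.card (centralizer (H : Set G)) := rfl
  have hKeq : cdMeasure K = Nat.card K * Nat.card (centralizer (K : Set G)) := rfl
  have hsupeq : cdMeasure (H ⊔ K) = c * c' := rfl
  have hinfeq : cdMeasure (H ⊓ K) = d * d' := rfl
  have hMpos : 0 < M := by
    rw [hMeq]
    exact Nat.mul_pos Nat.card_pos Nat.card_pos
  have hdpos : 0 < d := Nat.card_pos
  have hc'pos : 0 < c' := Nat.card_pos
  have hd'pos : 0 < d' := Nat.card_pos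
  have hQpos : 0 < Q := by
    haveI : Nonempty (↑(centralizer (H : Set G)) * ↑(centralizer (K : Set G)) : Set G) :=
      ⟨⟨(1 : G) * 1, Set.mul_mem_mul (one_mem _) (one_mem _)⟩⟩
    exact Nat.card_pos
  have key : M * M = (P * d) * (Q * c') := by
    rw [e1, e2]
    nth_rewrite 2 [← hK]
    rw [hMeq, hKeq]
    ring
  have up : (P * d) * (Q * c') ≤ (c * d) * (d' * c') :=
    Nat.mul_le_mul (Nat.mul_le_mul i3 le_rfl) (Nat.mul_le_mul i4 le_rfl)
  have down : (c * d) * (d' * c') ≤ M * M := by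
    have h5 : c * c' ≤ M := by rw [← hsupeq]; exact hH _
    have h6 : d * d' ≤ M := by rw [← hinfeq]; exact hH _
    calc (c * d) * (d' * c') = (c * c') * (d * d') := by ring
      _ ≤ M * M := Nat.mul_le_mul h5 h6
  have hall : (P * d) * (Q * c') = (c * d) * (d' * c') :=
    le_antisymm up (by calc (c * d) * (d' * c') ≤ M * M := down
                      _ = (P * d) * (Q * c') := key)
  -- first conclusion : d * d' = M
  have hfirst : d * d' = M := by
    have h5 : c * c' ≤ M := by rw [← hsupeq]; exact hH _
    have h6 : d * d' ≤ M := by rw [← hinfeq]; exact hH _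
    have hcc : (c * c') * (d * d') = M * M := by
      calc (c * c') * (d * d') = (c * d) * (d' * c') := by ring
        _ = (P * d) * (Q * c') := hall.symm
        _ = M * M := key.symm
    refine le_antisymm h6 ?_
    have step : (c * c') * (d * d') ≤ M * (d * d') := Nat.mul_le_mul h5 le_rfl
    rw [hcc] at step
    exact Nat.le_of_mul_le_mul_left step hMpos
  -- second conclusion : c * d = P * d = card H * card K
  have hPc : c * d = P * d := by
    have h1 : (c * d) * (d' * c') ≤ (P * d) * (d' * c') := by
      calc (c * d) * (d' * c') = (P * d) * (Q * c') := hall.symm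
        _ ≤ (P * d) * (d' * c') := Nat.mul_le_mul le_rfl (Nat.mul_le_mul i4 le_rfl)
    have h2 : (P * d) * (d' * c') ≤ (c * d) * (d' * c') :=
      Nat.mul_le_mul (Nat.mul_le_mul i3 le_rfl) le_rfl
    have := le_antisymm h1 h2
    exact (Nat.eq_of_mul_eq_mul_right (Nat.mul_pos hd'pos hc'pos) this)
  refine ⟨by rw [hinfeq, hfirst], ?_⟩
  rw [hPc, e1]
lemma CD.centralizer_bot : centralizer (((⊥ : Subgroup G)) : Set G) = ⊤ := by
  rw [centralizer_eq_top_iff_subset]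
  intro x hx
  simp only [Subgroup.coe_bot, Set.mem_singleton_iff] at hx
  subst hx
  exact Subgroup.one_mem _

lemma CD.cd_bot : cdMeasure (⊥ : Subgroup G) = Nat.card G := by
  unfold cdMeasure
  rw [CD.centralizer_bot, Subgroup.card_bot, Subgroup.card_top, one_mul]

lemma CD.pdvd_of_pgroup_nontrivial {p : ℕ} [Fact p.Prime] {H : Type*} [Group H] [Finite H]
    [Nontrivial H] (hpg : IsPGroup p H) : p ∣ Nat.card H := by
  obtain ⟨n, hn⟩ := IsPGroup.iff_card.mp hpg
  have hne1 : 1 < Nat.card H := Finite.one_lt_card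
  rcases n with _ | n
  · simp at hn; omega
  · rw [hn]; exact dvd_pow_self p n.succ_ne_zero

lemma CD.sylow_bot_false {p : ℕ} [Fact p.Prime] (S : Sylow p G)
    (hS : (S : Subgroup G) ≠ ⊥)
    (hSm : ∀ L : Subgroup G, cdMeasure L ≤ cdMeasure (S : Subgroup G))
    (hbot : cdMeasure (⊥ : Subgroup G) = cdMeasure (S : Subgroup G)) : False := by
  set H : Subgroup G := (S : Subgroup G) with hH
  have hcard : Nat.card H * Nat.card (centralizer (H : Set G)) = Nat.card G := by
    have h1 : cdMeasure H = Nat.card G := by rw [← hbot, CD.cd_bot]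
    exact h1
  have hindex : Nat.card (centralizer (H : Set G)) = H.index := by
    have h2 : Nat.card H * H.index = Nat.card G := Subgroup.card_mul_index H
    exact Nat.eq_of_mul_eq_mul_left Nat.card_pos (by rw [hcard, h2])
  haveI : Nontrivial H := (Subgroup.nontrivial_iff_ne_bot H).mpr hS
  have hpg : IsPGroup p H := S.isPGroup'
  haveI hcnt : Nontrivial (Subgroup.center H) := hpg.center_nontrivial
  have hZp : p ∣ Nat.card (Subgroup.center H) :=
    CD.pdvd_of_pgroup_nontrivial (hpg.to_subgroup (Subgroup.center H))
  have hmap : (Subgroup.center H).map H.subtype ≤ centralizer (H : Set G) := by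
    intro x hx
    obtain ⟨z, hz, rfl⟩ := Subgroup.mem_map.mp hx
    rw [mem_centralizer_iff]
    intro h hh
    have hcz := (Subgroup.mem_center_iff.mp hz) ⟨h, hh⟩
    show h * (z : G) = (z : G) * h
    simpa using congrArg Subtype.val hcz
  have hdvd : p ∣ Nat.card (centralizer (H : Set G)) := by
    refine dvd_trans ?_ (Subgroup.card_dvd_of_le hmap)
    have hcongr : Nat.card ((Subgroup.center H).map H.subtype) = Nat.card (Subgroup.center H) :=
      (Nat.card_congr (Subgroup.equivMapOfInjective (Subgroup.center H) H.subtype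
        (Subgroup.subtype_injective H)).toEquiv).symm
    rw [hcongr]; exact hZp
  have hpS : p ∣ Nat.card H := CD.pdvd_of_pgroup_nontrivial hpg
  have hcop : (Nat.card H).Coprime H.index := S.card_coprime_index
  rw [hindex] at hdvd
  have hg : p ∣ Nat.gcd (Nat.card H) H.index := Nat.dvd_gcd hpS hdvd
  rw [Nat.Coprime] at hcop
  rw [hcop] at hg
  have h1 := Nat.le_of_dvd one_pos hg
  have := (Fact.out : p.Prime).two_le
  omega

lemma CD.not_both_sylow {p q : ℕ} (hp : p.Prime) (hq : q.Prime) (S : Sylow p G) (T : Sylow q G)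
    (hS : (S : Subgroup G) ≠ ⊥) (hT : (T : Subgroup G) ≠ ⊥)
    (hne : (S : Subgroup G) ≠ (T : Subgroup G))
    (hSm : ∀ L : Subgroup G, cdMeasure L ≤ cdMeasure (S : Subgroup G))
    (hTm : ∀ L : Subgroup G, cdMeasure L ≤ cdMeasure (T : Subgroup G)) : False := by
  haveI := Fact.mk hp; haveI := Fact.mk hq
  have hK : cdMeasure (T : Subgroup G) = cdMeasure (S : Subgroup G) := le_antisymm (hSm _) (hTm _)
  obtain ⟨hinf, hcard⟩ := CD.cd_eq_of_max hSm hK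
  by_cases hpq : p = q
  · subst hpq
    set n := (Nat.card G).factorization p with hn
    have ha : Nat.card (S : Subgroup G) = p ^ n := S.card_eq_multiplicity
    have hb : Nat.card (T : Subgroup G) = p ^ n := T.card_eq_multiplicity
    have hddvd : Nat.card ((S : Subgroup G) ⊓ (T : Subgroup G) : Subgroup G) ∣ p ^ n := by
      rw [← ha]; exact Subgroup.card_dvd_of_le inf_le_left
    obtain ⟨j, hjle, hd⟩ := (Nat.dvd_prime_pow hp).mp hddvd
    have hjn : j ≠ n := by
      intro hjeq
      subst hjeq
      have heq : ((S : Subgroup G) ⊓ (T : Subgroup G)) = (S : Subgroup G) :=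
        Subgroup.eq_of_le_of_card_ge inf_le_left (by rw [ha, hd])
      have hle : (S : Subgroup G) ≤ (T : Subgroup G) := by
        rw [← heq]; exact inf_le_right
      exact hne (Subgroup.eq_of_le_of_card_ge hle (by rw [ha, hb]))
    -- card (S ⊔ T) = p ^ (2n - j)
    have hc2 : Nat.card ((S : Subgroup G) ⊔ (T : Subgroup G) : Subgroup G) * p ^ j
        = p ^ n * p ^ n := by
      rw [← hd, hcard, ha, hb]
    have hn1 : 1 ≤ n := by
      by_contra hcon
      have hn0 : n = 0 := by omega
      have h1 : 1 < Nat.card (S : Subgroup G) := (Subgroup.one_lt_card_iff_ne_bot _).mpr hS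
      rw [ha, hn0, pow_zero] at h1
      omega
    have hpow : p ^ (2 * n - j) * p ^ j = p ^ n * p ^ n := by
      rw [← pow_add, ← pow_add]
      congr 1
      omega
    have hcval : Nat.card ((S : Subgroup G) ⊔ (T : Subgroup G) : Subgroup G) = p ^ (2 * n - j) :=
      Nat.eq_of_mul_eq_mul_right (pow_pos hp.pos j) (by rw [hc2, hpow])
    have hsupdvd : Nat.card ((S : Subgroup G) ⊔ (T : Subgroup G) : Subgroup G) ∣ Nat.card G := by
      have h3 := Subgroup.card_dvd_of_le (le_top : (S : Subgroup G) ⊔ (T : Subgroup G) ≤ ⊤)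
      rwa [Subgroup.card_top] at h3
    have hdvdG : p ^ (n + 1) ∣ Nat.card G := by
      refine dvd_trans (pow_dvd_pow p (by omega : n + 1 ≤ 2 * n - j)) ?_
      rw [← hcval]; exact hsupdvd
    have hGm : p ^ n * (S : Subgroup G).index = Nat.card G := by
      rw [← ha]; exact Subgroup.card_mul_index _
    have hstep : p ^ n * p ∣ p ^ n * (S : Subgroup G).index := by
      rw [hGm, ← pow_succ]; exact hdvdG
    have hpidx : p ∣ (S : Subgroup G).index :=
      (mul_dvd_mul_iff_left (pow_ne_zero n hp.pos.ne')).mp hstep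
    have hpcard : p ∣ Nat.card (S : Subgroup G) := by
      rw [ha]; exact dvd_pow_self p (by omega : n ≠ 0)
    have hcop : (Nat.card (S : Subgroup G)).Coprime (S : Subgroup G).index :=
      S.card_coprime_index
    have hg : p ∣ Nat.gcd (Nat.card (S : Subgroup G)) (S : Subgroup G).index :=
      Nat.dvd_gcd hpcard hpidx
    rw [Nat.Coprime] at hcop
    rw [hcop] at hg
    have h1 := Nat.le_of_dvd one_pos hg
    have := hp.two_le
    omega
  · have hdisj : Disjoint (S : Subgroup G) (T : Subgroup G) :=
      IsPGroup.disjoint_of_ne p q hpq _ _ S.isPGroup' T.isPGroup'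
    rw [hdisj.eq_bot] at hinf
    exact CD.sylow_bot_false S hS hSm hinf
end CDAux

theorem delta_cd_ge_num_nontrivial_sylow
    (G : Type*) [Group G] [Finite G] (n : ℕ)
    (hn : n ≤ Nat.card {H : Subgroup G //
      H ≠ ⊥ ∧ ∃ (p : ℕ), p.Prime ∧ ∃ S : Sylow p G, (S : Subgroup G) = H}) :
    n ≤ Nat.card {H : Subgroup G //
      ¬ ∀ K : Subgroup G, cdMeasure K ≤ cdMeasure H} := by
  classical
  haveI : Finite (Subgroup G) :=
    Finite.of_injective (fun H => (H : Set G)) SetLike.coe_injective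
  refine hn.trans ?_
  let f : {H : Subgroup G // H ≠ ⊥ ∧ ∃ p : ℕ, p.Prime ∧ ∃ S : Sylow p G, (S : Subgroup G) = H} →
      {H : Subgroup G // ¬ ∀ K : Subgroup G, cdMeasure K ≤ cdMeasure H} := fun a =>
    if h : ∀ K : Subgroup G, cdMeasure K ≤ cdMeasure a.1 then
      ⟨⊥, by
        intro hbot
        obtain ⟨hne, p, hp, Sy, hSy⟩ := a.2
        haveI := Fact.mk hp
        refine CD.sylow_bot_false Sy ?_ ?_ ?_
        · rw [hSy]; exact hne
        · intro L; rw [hSy]; exact h L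
        · rw [hSy]; exact le_antisymm (h ⊥) (hbot a.1)⟩
    else ⟨a.1, h⟩
  refine Nat.card_le_card_of_injective f ?_
  rintro a b hab
  by_cases ha : ∀ K : Subgroup G, cdMeasure K ≤ cdMeasure a.1 <;>
    by_cases hb : ∀ K : Subgroup G, cdMeasure K ≤ cdMeasure b.1
  · obtain ⟨hnea, p, hp, Sa, hSa⟩ := a.2
    obtain ⟨hneb, q, hq, Sb, hSb⟩ := b.2
    apply Subtype.ext
    by_contra hne
    refine CD.not_both_sylow (G := G) hp hq Sa Sb ?_ ?_ ?_ ?_ ?_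
    · rw [hSa]; exact hnea
    · rw [hSb]; exact hneb
    · rw [hSa, hSb]; exact hne
    · intro L; rw [hSa]; exact ha L
    · intro L; rw [hSb]; exact hb L
  · simp only [f, dif_pos ha, dif_neg hb, Subtype.mk.injEq] at hab
    exact absurd hab.symm b.2.1
  · simp only [f, dif_neg ha, dif_pos hb, Subtype.mk.injEq] at hab
    exact absurd hab a.2.1
  · simp only [f, dif_neg ha, dif_neg hb, Subtype.mk.injEq] at hab
    exact Subtype.ext hab
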